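/- For every real inner product space and every family of vectors (V_w), and at every grade n: ‖id‖² = ‖½(id−S)‖² + ‖½(id+S)‖², where the inner product (and hence the norm) is taken over the words of length n. -/

import Mathlib

open Finsupp

/-- Words over the alphabet `A = {0,1,…,d}`. -/
abbrev Word (d : ℕ) : Type := List (Fin (d+1))

/-- The free real vector space with basis the set of all words. -/
abbrev KA (d : ℕ) : Type := Word d →₀ ℝ

/-- Shuffle product of two words, as an element of `KA d`. -/
noncomputable def shuffleWord (d : ℕ) : Word d → Word d → KA d
  | [], v => Finsupp.single v 1
  | a :: u, [] => Finsupp.single (a :: u) 1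
  | a :: u, b :: v =>
      Finsupp.mapDomain (List.cons a) (shuffleWord d u (b :: v)) +
      Finsupp.mapDomain (List.cons b) (shuffleWord d (a :: u) v)
  termination_by u v => u.length + v.length

/-- Bilinear extension of the shuffle product to `KA d`. -/
noncomputable def sh (d : ℕ) (x y : KA d) : KA d :=
  x.sum fun u cu => y.sum fun v cv => (cu * cv) • shuffleWord d u v

/-- Admissible words: concatenations of blocks each of which is the single
letter `0` or a pair `aa` with `a ≠ 0`. -/
inductive Admissible (d : ℕ) : Word d → Prop
  | nil : Admissible d []
  | zero {w : Word d} : Admissible d w → Admissible d (0 :: w)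
  | pair {w : Word d} (a : Fin (d+1)) : a ≠ 0 → Admissible d w →
      Admissible d (a :: a :: w)

/-- Number of `0` letters. -/
def zc (d : ℕ) (w : Word d) : ℕ := w.count 0

/-- Half the number of nonzero letters. -/
def dc (d : ℕ) (w : Word d) : ℕ := (w.length - w.count 0) / 2

def nc (d : ℕ) (w : Word d) : ℕ := zc d w + dc d w

open Classical in
/-- The expectation map on words. -/
noncomputable def Ebar (d : ℕ) (t : ℝ) (w : Word d) : ℝ :=
  if Admissible d w then t ^ nc d w / (2 ^ dc d w * Nat.factorial (nc d w)) else 0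

/-- Linear extension of the expectation map to `KA d`. -/
noncomputable def EbarL (d : ℕ) (t : ℝ) (x : KA d) : ℝ :=
  x.sum fun w c => c * Ebar d t w

/-- The linear endomorphism of `KA d` determined by values on basis words. -/
noncomputable def wordLift (d : ℕ) (f : Word d → KA d) : KA d →ₗ[ℝ] KA d :=
  Finsupp.lsum ℝ fun w => LinearMap.toSpanSingleton ℝ (KA d) (f w)

/-- The identity endomorphism `id`. -/
noncomputable def idE (d : ℕ) : KA d →ₗ[ℝ] KA d := LinearMap.id

/-- The reversal endomorphism `|S|`. -/
noncomputable def revE (d : ℕ) : KA d →ₗ[ℝ] KA d :=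
  wordLift d fun w => Finsupp.single w.reverse 1

/-- The antipode `S`. -/
noncomputable def Sa (d : ℕ) : KA d →ₗ[ℝ] KA d :=
  wordLift d fun w => Finsupp.single w.reverse ((-1 : ℝ) ^ w.length)

/-- The convolution unit `ν`. -/
noncomputable def nuE (d : ℕ) : KA d →ₗ[ℝ] KA d :=
  wordLift d fun w => if w = [] then Finsupp.single ([] : Word d) 1 else 0

/-- The expectation endomorphism `E`. -/
noncomputable def EE (d : ℕ) (t : ℝ) : KA d →ₗ[ℝ] KA d :=
  wordLift d fun w => Finsupp.single ([] : Word d) (Ebar d t w)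

/-- The convolution product `X ⋆ Y`. -/
noncomputable def conv (d : ℕ) (X Y : KA d →ₗ[ℝ] KA d) : KA d →ₗ[ℝ] KA d :=
  wordLift d fun w => ∑ k ∈ Finset.range (w.length + 1),
    sh d (X (Finsupp.single (w.take k) 1)) (Y (Finsupp.single (w.drop k) 1))

/-- Convolution powers, `X^{⋆0} = ν`. -/
noncomputable def convPow (d : ℕ) (X : KA d →ₗ[ℝ] KA d) : ℕ → (KA d →ₗ[ℝ] KA d)
  | 0 => nuE d
  | k + 1 => conv d X (convPow d X k)

/-- The inner product `⟨X,Y⟩` of endomorphisms, taken over the words of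
length `n`, relative to the family of vectors `Vf`. -/
noncomputable def ip (d : ℕ) (t : ℝ) {H : Type*} [NormedAddCommGroup H]
    [InnerProductSpace ℝ H] (Vf : Word d → H) (n : ℕ)
    (X Y : KA d →ₗ[ℝ] KA d) : ℝ :=
  ∑ u : Fin n → Fin (d+1), ∑ v : Fin n → Fin (d+1),
    EbarL d t (sh d (X (Finsupp.single (List.ofFn u) 1))
                    (Y (Finsupp.single (List.ofFn v) 1))) *
      (inner ℝ (Vf (List.ofFn u)) (Vf (List.ofFn v)) : ℝ)

/-- Positive semidefiniteness of the expectation Gram matrix at grade `n`: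
indexed by the words of length `n` together with the empty word. -/
def gramPSD (d n : ℕ) (t : ℝ) : Prop :=
  ∀ c : Option (Fin n → Fin (d+1)) → ℝ,
    0 ≤ ∑ x : Option (Fin n → Fin (d+1)), ∑ y : Option (Fin n → Fin (d+1)),
      c x * c y *
        EbarL d t (shuffleWord d (x.elim ([] : Word d) List.ofFn)
                                 (y.elim ([] : Word d) List.ofFn))



namespace Aux

variable {d : ℕ}

lemma mapDomain_comm (f g : Word d → Word d) (h : ∀ w, f (g w) = g (f w)) (x : KA d) :
    Finsupp.mapDomain f (Finsupp.mapDomain g x) = Finsupp.mapDomain g (Finsupp.mapDomain f x) := by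
  rw [← Finsupp.mapDomain_comp, ← Finsupp.mapDomain_comp]
  exact Finsupp.mapDomain_congr fun w _ => h w

lemma shuffle_nil_left (v : Word d) : shuffleWord d [] v = Finsupp.single v 1 := by
  rw [shuffleWord]

lemma shuffle_nil_right (u : Word d) : shuffleWord d u [] = Finsupp.single u 1 := by
  cases u <;> rw [shuffleWord]

lemma shuffle_cons_cons (a b : Fin (d+1)) (u v : Word d) :
    shuffleWord d (a :: u) (b :: v) =
      Finsupp.mapDomain (List.cons a) (shuffleWord d u (b :: v)) +
      Finsupp.mapDomain (List.cons b) (shuffleWord d (a :: u) v) := by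
  rw [shuffleWord]

lemma shuffle_append (u v : Word d) (a b : Fin (d+1)) :
    shuffleWord d (u ++ [a]) (v ++ [b]) =
      Finsupp.mapDomain (· ++ [a]) (shuffleWord d u (v ++ [b])) +
      Finsupp.mapDomain (· ++ [b]) (shuffleWord d (u ++ [a]) v) := by
  match u, v with
  | [], [] =>
      simp only [List.nil_append, shuffle_nil_left, shuffle_nil_right,
        shuffle_cons_cons, Finsupp.mapDomain_single]
      exact add_comm _ _
  | [], e :: v' =>
      have ih := shuffle_append ([] : Word d) v' a b
      simp only [List.nil_append, List.cons_append] at ih ⊢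
      rw [shuffle_cons_cons, ih, shuffle_cons_cons]
      simp only [shuffle_nil_left, Finsupp.mapDomain_add, Finsupp.mapDomain_single,
        List.cons_append, List.nil_append]
      rw [mapDomain_comm (· ++ [b]) (List.cons e) (by intro w; simp)]
      abel
  | c :: u', [] =>
      have ih := shuffle_append u' ([] : Word d) a b
      simp only [List.nil_append, List.cons_append] at ih ⊢
      rw [shuffle_cons_cons, ih, shuffle_cons_cons]
      simp only [shuffle_nil_right, Finsupp.mapDomain_add, Finsupp.mapDomain_single,
        List.cons_append, List.nil_append]
      rw [mapDomain_comm (· ++ [a]) (List.cons c) (by intro w; simp)]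
      abel
  | c :: u', e :: v' =>
      have ih1 := shuffle_append u' (e :: v') a b
      have ih2 := shuffle_append (c :: u') v' a b
      simp only [List.cons_append] at ih1 ih2 ⊢
      rw [shuffle_cons_cons, ih1, ih2]
      conv_rhs => rw [shuffle_cons_cons, shuffle_cons_cons]
      simp only [Finsupp.mapDomain_add]
      rw [mapDomain_comm (· ++ [a]) (List.cons c) (by intro w; simp),
        mapDomain_comm (· ++ [b]) (List.cons c) (by intro w; simp),
        mapDomain_comm (· ++ [a]) (List.cons e) (by intro w; simp),
        mapDomain_comm (· ++ [b]) (List.cons e) (by intro w; simp)]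
      abel
  termination_by u.length + v.length
  decreasing_by all_goals (simp [List.length_cons]; try omega)

lemma shuffle_reverse (u v : Word d) :
    Finsupp.mapDomain List.reverse (shuffleWord d u v) =
      shuffleWord d u.reverse v.reverse := by
  match u, v with
  | [], v => rw [shuffle_nil_left, Finsupp.mapDomain_single, List.reverse_nil, shuffle_nil_left]
  | c :: u', [] =>
      rw [shuffle_nil_right, Finsupp.mapDomain_single, List.reverse_nil, shuffle_nil_right]
  | c :: u', e :: v' =>
      have ih1 := shuffle_reverse u' (e :: v')
      have ih2 := shuffle_reverse (c :: u') v'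
      rw [shuffle_cons_cons, Finsupp.mapDomain_add, ← Finsupp.mapDomain_comp,
        ← Finsupp.mapDomain_comp]
      have h1 : List.reverse ∘ List.cons c = (· ++ [c]) ∘ (List.reverse : Word d → Word d) := by
        funext w; simp
      have h2 : List.reverse ∘ List.cons e = (· ++ [e]) ∘ (List.reverse : Word d → Word d) := by
        funext w; simp
      rw [h1, h2, Finsupp.mapDomain_comp, Finsupp.mapDomain_comp, ih1, ih2,
        List.reverse_cons, List.reverse_cons, shuffle_append]
  termination_by u.length + v.length
  decreasing_by all_goals (simp [List.length_cons]; try omega)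

lemma adm_append {w v : Word d} (hw : Admissible d w) (hv : Admissible d v) :
    Admissible d (w ++ v) := by
  induction hw with
  | nil => exact hv
  | zero _ ih => exact Admissible.zero ih
  | pair a ha _ ih => exact Admissible.pair a ha ih

lemma adm_reverse {w : Word d} (hw : Admissible d w) :
    Admissible d w.reverse := by
  induction hw with
  | nil => exact Admissible.nil
  | zero _ ih =>
      rw [List.reverse_cons]
      exact adm_append ih (Admissible.zero Admissible.nil)
  | pair a ha _ ih =>
      rw [List.reverse_cons, List.reverse_cons, List.append_assoc]
      exact adm_append ih (Admissible.pair a ha Admissible.nil)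

lemma Ebar_reverse (t : ℝ) (w : Word d) : Ebar d t w.reverse = Ebar d t w := by
  have hadm : Admissible d w.reverse ↔ Admissible d w := by
    constructor
    · intro h; have := adm_reverse h; rwa [List.reverse_reverse] at this
    · exact adm_reverse
  simp only [Ebar, nc, zc, dc, List.count_reverse, List.length_reverse]
  rcases Classical.em (Admissible d w) with h | h
  · rw [if_pos h, if_pos (hadm.mpr h)]
  · rw [if_neg h, if_neg (fun hh => h (hadm.mp hh))]

lemma EbarL_mapDomain_reverse (t : ℝ) (x : KA d) :
    EbarL d t (Finsupp.mapDomain List.reverse x) = EbarL d t x := by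
  unfold EbarL
  rw [Finsupp.sum_mapDomain_index (by intro b; simp) (by intro b m₁ m₂; ring)]
  exact Finsupp.sum_congr fun w _ => by rw [Ebar_reverse]

lemma EbarL_add (t : ℝ) (x y : KA d) :
    EbarL d t (x + y) = EbarL d t x + EbarL d t y := by
  unfold EbarL
  rw [Finsupp.sum_add_index' (by intro b; simp) (by intro b m₁ m₂; ring)]

lemma EbarL_smul (t : ℝ) (c : ℝ) (x : KA d) :
    EbarL d t (c • x) = c * EbarL d t x := by
  unfold EbarL
  rw [Finsupp.sum_smul_index (by intro b; simp), Finsupp.mul_sum]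
  exact Finsupp.sum_congr fun w _ => by ring

lemma sh_single_single (u v : Word d) (c c' : ℝ) :
    sh d (Finsupp.single u c) (Finsupp.single v c') = (c * c') • shuffleWord d u v := by
  unfold sh
  rw [Finsupp.sum_single_index (by simp), Finsupp.sum_single_index (by simp)]

lemma sh_add_left (x x' y : KA d) : sh d (x + x') y = sh d x y + sh d x' y := by
  unfold sh
  rw [Finsupp.sum_add_index' (by intro u; simp) ?_]
  intro u c c'
  rw [← Finsupp.sum_add]
  exact Finsupp.sum_congr fun v _ => by rw [add_mul, add_smul]

lemma sh_add_right (x y y' : KA d) : sh d x (y + y') = sh d x y + sh d x y' := by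
  unfold sh
  rw [← Finsupp.sum_add]
  refine Finsupp.sum_congr fun u _ => ?_
  rw [Finsupp.sum_add_index' (by intro v; simp) ?_]
  intro v c c'
  rw [mul_add, add_smul]

lemma sh_smul_left (c : ℝ) (x y : KA d) : sh d (c • x) y = c • sh d x y := by
  unfold sh
  rw [Finsupp.sum_smul_index (by intro u; simp), Finsupp.smul_sum]
  refine Finsupp.sum_congr fun u _ => ?_
  rw [Finsupp.smul_sum]
  refine Finsupp.sum_congr fun v _ => ?_
  rw [smul_smul]
  ring_nf

lemma sh_smul_right (c : ℝ) (x y : KA d) : sh d x (c • y) = c • sh d x y := by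
  unfold sh
  rw [Finsupp.smul_sum]
  refine Finsupp.sum_congr fun u _ => ?_
  rw [Finsupp.sum_smul_index (by intro v; simp), Finsupp.smul_sum]
  refine Finsupp.sum_congr fun v _ => ?_
  rw [smul_smul]
  ring_nf

lemma Sa_single (w : Word d) :
    Sa d (Finsupp.single w (1:ℝ)) = Finsupp.single w.reverse ((-1 : ℝ) ^ w.length) := by
  unfold Sa wordLift
  rw [Finsupp.lsum_single]
  simp [LinearMap.toSpanSingleton_apply]

end Aux

open Aux in
theorem stmt_12 (d n : ℕ) (hd : 1 ≤ d) (hn : 1 ≤ n) (t : ℝ) (ht : 0 < t)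
    {H : Type*} [NormedAddCommGroup H] [InnerProductSpace ℝ H]
    (Vf : Word d → H) :
    ip d t Vf n (idE d) (idE d)
      = ip d t Vf n ((1 / 2 : ℝ) • (idE d - Sa d)) ((1 / 2 : ℝ) • (idE d - Sa d))
        + ip d t Vf n ((1 / 2 : ℝ) • (idE d + Sa d)) ((1 / 2 : ℝ) • (idE d + Sa d)) := by
  unfold ip
  rw [← Finset.sum_add_distrib]
  refine Finset.sum_congr rfl fun u _ => ?_
  rw [← Finset.sum_add_distrib]
  refine Finset.sum_congr rfl fun v _ => ?_
  rw [← add_mul]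
  congr 1
  set wu := List.ofFn u with hwu
  set wv := List.ofFn v with hwv
  have hlu : wu.length = n := List.length_ofFn (f := u)
  have hlv : wv.length = n := List.length_ofFn (f := v)
  have hid : idE d (Finsupp.single wu (1:ℝ)) = Finsupp.single wu 1 := rfl
  have hidv : idE d (Finsupp.single wv (1:ℝ)) = Finsupp.single wv 1 := rfl
  have hXu : ∀ (s : ℝ) (w : Word d),
      ((1 / 2 : ℝ) • (idE d + s • Sa d)) (Finsupp.single w (1:ℝ))
        = (1/2 : ℝ) • (Finsupp.single w 1 + s • Finsupp.single w.reverse ((-1:ℝ)^w.length)) := by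
    intro s w
    simp [LinearMap.smul_apply, LinearMap.add_apply, Sa_single, idE]
  have key : ∀ (s₁ s₂ : ℝ),
      EbarL d t (sh d (((1 / 2 : ℝ) • (idE d + s₁ • Sa d)) (Finsupp.single wu 1))
        (((1 / 2 : ℝ) • (idE d + s₂ • Sa d)) (Finsupp.single wv 1)))
      = (1/4 : ℝ) * (EbarL d t (shuffleWord d wu wv)
          + s₂ * (-1:ℝ)^n * EbarL d t (shuffleWord d wu wv.reverse)
          + s₁ * (-1:ℝ)^n * EbarL d t (shuffleWord d wu.reverse wv)
          + s₁ * s₂ * EbarL d t (shuffleWord d wu wv)) := by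
    intro s₁ s₂
    rw [hXu, hXu]
    have hrev : EbarL d t (shuffleWord d wu.reverse wv.reverse)
        = EbarL d t (shuffleWord d wu wv) := by
      rw [← shuffle_reverse, EbarL_mapDomain_reverse]
    simp only [sh_smul_left, sh_smul_right, sh_add_left, sh_add_right, sh_single_single,
      one_mul, mul_one, smul_smul, EbarL_smul, EbarL_add, hlu, hlv]
    rw [hrev]
    have h1 : ((-1:ℝ)^n) * ((-1:ℝ)^n) = 1 := by
      rw [← pow_add, Even.neg_one_pow ⟨n, rfl⟩]
    linear_combination (1/4 * s₁ * s₂ * EbarL d t (shuffleWord d wu wv)) * h1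
  have hminus : (1 / 2 : ℝ) • (idE d - Sa d) = (1 / 2 : ℝ) • (idE d + (-1:ℝ) • Sa d) := by
    module
  have hplus : (1 / 2 : ℝ) • (idE d + Sa d) = (1 / 2 : ℝ) • (idE d + (1:ℝ) • Sa d) := by
    rw [one_smul]
  rw [hminus, hplus, key (-1) (-1), key 1 1, hid, hidv, sh_single_single, one_mul,
    EbarL_smul, one_mul]
  ring
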